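/- arXiv:1112.1965 — 9 statements merged into one kernel-verified Lean document; each statement's English description precedes it below -/
import Mathlib

section
/- Let L₀, L₁, L₂ and K₀, K₁, K₂ be vectors in ℝ³ such that (L₀, L₁, L₂) is a basis of ℝ³ and the simplicity constraints hold: L_μ·K_ν + L_ν·K_μ = 0 for all μ, ν ∈ {0,1,2}. Then there exist a real number χ⁰ ≠ 0, a vector χ ∈ ℝ³, vectors e₀, e₁, e₂ ∈ ℝ³ and real numbers e⁰₀, e⁰₁, e⁰₂ such that K_μ = χ × e_μ and L_μ = χ⁰·e_μ − e⁰_μ·χ for all μ ∈ {0,1,2}. -/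
open Matrix

/-- **Gravitational sector of Proposition 1.**
If `(L 0, L 1, L 2)` is a basis of `ℝ³` (linearly independent and spanning) and the
simplicity constraints `L μ ⬝ᵥ K ν + L ν ⬝ᵥ K μ = 0` hold, then there exist `χ⁰ ≠ 0`,
`χ ∈ ℝ³`, vectors `e μ ∈ ℝ³` and scalars `e⁰ μ` such that `K μ = χ × e μ` and
`L μ = χ⁰ • e μ - e⁰ μ • χ`. -/
theorem gravitational_sector
    (L K : Fin 3 → (Fin 3 → ℝ))
    (hLindep : LinearIndependent ℝ L)
    (hLspan : Submodule.span ℝ (Set.range L) = ⊤)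
    (hC : ∀ μ ν : Fin 3, L μ ⬝ᵥ K ν + L ν ⬝ᵥ K μ = 0) :
    ∃ (χ0 : ℝ) (χ : Fin 3 → ℝ) (e : Fin 3 → (Fin 3 → ℝ)) (e0 : Fin 3 → ℝ),
      χ0 ≠ 0 ∧
      (∀ μ : Fin 3, K μ = crossProduct χ (e μ)) ∧
      (∀ μ : Fin 3, L μ = χ0 • e μ - e0 μ • χ) := by
  have hdet : (Matrix.of L).det ≠ 0 := by
    have : IsUnit (Matrix.of L) := linearIndependent_rows_iff_isUnit.mp hLindep
    exact ((Matrix.isUnit_iff_isUnit_det _).mp this).ne_zero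
  have hdne : L 0 ⬝ᵥ crossProduct (L 1) (L 2) ≠ 0 := by
    have h : L 0 ⬝ᵥ crossProduct (L 1) (L 2) = (Matrix.of L).det := by
      have hm : (![L 0, L 1, L 2] : Matrix (Fin 3) (Fin 3) ℝ) = Matrix.of L := by
        ext i j; fin_cases i <;> rfl
      exact (triple_product_eq_det _ _ _).trans (congrArg Matrix.det hm)
    rw [h]; exact hdet
  set d : ℝ := L 0 ⬝ᵥ crossProduct (L 1) (L 2) with hd
  set w : Fin 3 → ℝ :=
    (L 2 ⬝ᵥ K 1) • L 0 + (L 0 ⬝ᵥ K 2) • L 1 + (L 1 ⬝ᵥ K 0) • L 2 with hw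
  have key : ∀ μ ν : Fin 3, L μ ⬝ᵥ crossProduct w (L ν) = d * (L μ ⬝ᵥ K ν) := by
    intro μ ν
    have e01 := hC 0 1; have e02 := hC 0 2; have e12 := hC 1 2
    have e00 := hC 0 0; have e11 := hC 1 1; have e22 := hC 2 2
    simp only [dotProduct, Fin.sum_univ_three] at e01 e02 e12 e00 e11 e22
    have f0 : (⟨0, by omega⟩ : Fin 3) = 0 := rfl
    have f1 : (⟨1, by omega⟩ : Fin 3) = 1 := rfl
    have f2 : (⟨2, by omega⟩ : Fin 3) = 2 := rfl
    fin_cases μ <;> fin_cases ν <;>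
      simp only [f0, f1, f2, hw, hd, cross_apply, dotProduct, Fin.sum_univ_three, Pi.add_apply,
        Pi.smul_apply, smul_eq_mul, Matrix.cons_val_zero, Matrix.cons_val_one,
        Matrix.head_cons, Matrix.cons_val_two, Matrix.tail_cons, Fin.isValue]
    · linear_combination (-(L 0 0*L 1 1*L 2 2 - L 0 0*L 1 2*L 2 1 + L 0 1*L 1 2*L 2 0 - L 0 1*L 1 0*L 2 2 + L 0 2*L 1 0*L 2 1 - L 0 2*L 1 1*L 2 0)/2) * e00
    · linear_combination (-(L 0 0*L 1 1*L 2 2 - L 0 0*L 1 2*L 2 1 + L 0 1*L 1 2*L 2 0 - L 0 1*L 1 0*L 2 2 + L 0 2*L 1 0*L 2 1 - L 0 2*L 1 1*L 2 0)) * e01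
    · ring
    · ring
    · linear_combination (-(L 0 0*L 1 1*L 2 2 - L 0 0*L 1 2*L 2 1 + L 0 1*L 1 2*L 2 0 - L 0 1*L 1 0*L 2 2 + L 0 2*L 1 0*L 2 1 - L 0 2*L 1 1*L 2 0)/2) * e11
    · linear_combination (-(L 0 0*L 1 1*L 2 2 - L 0 0*L 1 2*L 2 1 + L 0 1*L 1 2*L 2 0 - L 0 1*L 1 0*L 2 2 + L 0 2*L 1 0*L 2 1 - L 0 2*L 1 1*L 2 0)) * e12
    · linear_combination (-(L 0 0*L 1 1*L 2 2 - L 0 0*L 1 2*L 2 1 + L 0 1*L 1 2*L 2 0 - L 0 1*L 1 0*L 2 2 + L 0 2*L 1 0*L 2 1 - L 0 2*L 1 1*L 2 0)) * e02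
    · ring
    · linear_combination (-(L 0 0*L 1 1*L 2 2 - L 0 0*L 1 2*L 2 1 + L 0 1*L 1 2*L 2 0 - L 0 1*L 1 0*L 2 2 + L 0 2*L 1 0*L 2 1 - L 0 2*L 1 1*L 2 0)/2) * e22
  refine ⟨1, d⁻¹ • w, L, fun _ => 0, one_ne_zero, ?_, ?_⟩
  · intro μ
    have hsub : ∀ u : Fin 3 → ℝ, (∀ ρ : Fin 3, L ρ ⬝ᵥ u = 0) → u = 0 := by
      intro u hu
      have hall : ∀ x : Fin 3 → ℝ, x ⬝ᵥ u = 0 := by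
        intro x
        have hx : x ∈ Submodule.span ℝ (Set.range L) := by rw [hLspan]; trivial
        induction hx using Submodule.span_induction with
        | mem y hy => obtain ⟨ρ, rfl⟩ := hy; exact hu ρ
        | zero => simp
        | add a b _ _ ha hb => simp [add_dotProduct, ha, hb]
        | smul c a _ ha => simp [smul_dotProduct, ha]
      exact dotProduct_self_eq_zero.mp (hall u)
    have hcs : crossProduct (d⁻¹ • w) (L μ) = d⁻¹ • crossProduct w (L μ) := by
      rw [_root_.map_smul]; rfl
    have h0 : K μ - crossProduct (d⁻¹ • w) (L μ) = 0 := by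
      apply hsub
      intro ρ
      rw [dotProduct_sub, hcs, dotProduct_smul, smul_eq_mul, key ρ μ, ← mul_assoc,
        inv_mul_cancel₀ hdne, one_mul, sub_self]
    have := sub_eq_zero.mp h0
    exact this
  · intro μ; simp
end

section
/- Let L₀, L₁, L₂ and K₀, K₁, K₂ be vectors in ℝ³ such that (K₀, K₁, K₂) is a basis of ℝ³ and the simplicity constraints hold: L_μ·K_ν + L_ν·K_μ = 0 for all μ, ν ∈ {0,1,2}. Then there exist a real number χ⁰ ≠ 0, a vector χ ∈ ℝ³, vectors e₀, e₁, e₂ ∈ ℝ³ and real numbers e⁰₀, e⁰₁, e⁰₂ such that L_μ = χ × e_μ and K_μ = χ⁰·e_μ − e⁰_μ·χ for all μ ∈ {0,1,2}. -/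
open Matrix

/-- **Topological sector of Proposition 1.**
If `(K 0, K 1, K 2)` is a basis of `ℝ³` (linearly independent and spanning) and the
simplicity constraints `L μ ⬝ᵥ K ν + L ν ⬝ᵥ K μ = 0` hold, then there exist `χ⁰ ≠ 0`,
`χ ∈ ℝ³`, vectors `e μ ∈ ℝ³` and scalars `e⁰ μ` such that `L μ = χ × e μ` and
`K μ = χ⁰ • e μ - e⁰ μ • χ`. -/
theorem topological_sector
    (L K : Fin 3 → (Fin 3 → ℝ))
    (hKindep : LinearIndependent ℝ K)
    (hKspan : Submodule.span ℝ (Set.range K) = ⊤)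
    (hC : ∀ μ ν : Fin 3, L μ ⬝ᵥ K ν + L ν ⬝ᵥ K μ = 0) :
    ∃ (χ0 : ℝ) (χ : Fin 3 → ℝ) (e : Fin 3 → (Fin 3 → ℝ)) (e0 : Fin 3 → ℝ),
      χ0 ≠ 0 ∧
      (∀ μ : Fin 3, L μ = crossProduct χ (e μ)) ∧
      (∀ μ : Fin 3, K μ = χ0 • e μ - e0 μ • χ) := by
  -- the scalar triple product of the `K`s is nonzero
  set d : ℝ := K 0 ⬝ᵥ crossProduct (K 1) (K 2) with hd_def
  have hd : d ≠ 0 := by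
    have h : IsUnit (Matrix.of K) := by
      rw [← Matrix.linearIndependent_rows_iff_isUnit]
      exact hKindep
    have hdet : (Matrix.of K).det ≠ 0 := by
      simpa [isUnit_iff_ne_zero] using (Matrix.isUnit_iff_isUnit_det _).1 h
    have hdd : (Matrix.of K).det = d := by
      simp [hd_def, Matrix.det_fin_three, crossProduct, dotProduct, Fin.sum_univ_three]
      ring
    rwa [hdd] at hdet
  -- the (unnormalized) vector `w` with `d • L μ = w × K μ`
  set w : Fin 3 → ℝ :=
    (L 1 ⬝ᵥ K 2) • K 0 + (L 2 ⬝ᵥ K 0) • K 1 + (L 0 ⬝ᵥ K 1) • K 2 with hw_def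
  have hC' : ∀ μ ν : Fin 3,
      (L μ 0 * K ν 0 + L μ 1 * K ν 1 + L μ 2 * K ν 2)
        + (L ν 0 * K μ 0 + L ν 1 * K μ 1 + L ν 2 * K μ 2) = 0 := by
    intro μ ν
    simpa [dotProduct, Fin.sum_univ_three] using hC μ ν
  have key : ∀ μ : Fin 3, d • L μ = crossProduct w (K μ) := by
    intro μ
    funext i
    fin_cases μ <;> fin_cases i <;>
      simp [hd_def, hw_def, crossProduct, dotProduct, Fin.sum_univ_three]
    · linear_combination ((K 1 1 * K 2 2 - K 1 2 * K 2 1)/2) * hC' 0 0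
        + (K 0 1 * K 1 2 - K 0 2 * K 1 1) * hC' 0 2
    · linear_combination ((K 1 2 * K 2 0 - K 1 0 * K 2 2)/2) * hC' 0 0
        + (K 0 2 * K 1 0 - K 0 0 * K 1 2) * hC' 0 2
    · linear_combination ((K 1 0 * K 2 1 - K 1 1 * K 2 0)/2) * hC' 0 0
        + (K 0 0 * K 1 1 - K 0 1 * K 1 0) * hC' 0 2
    · linear_combination (K 1 1 * K 2 2 - K 1 2 * K 2 1) * hC' 0 1
        + ((K 2 1 * K 0 2 - K 2 2 * K 0 1)/2) * hC' 1 1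
    · linear_combination (K 1 2 * K 2 0 - K 1 0 * K 2 2) * hC' 0 1
        + ((K 2 2 * K 0 0 - K 2 0 * K 0 2)/2) * hC' 1 1
    · linear_combination (K 1 0 * K 2 1 - K 1 1 * K 2 0) * hC' 0 1
        + ((K 2 0 * K 0 1 - K 2 1 * K 0 0)/2) * hC' 1 1
    · linear_combination (K 2 1 * K 0 2 - K 2 2 * K 0 1) * hC' 1 2
        + ((K 0 1 * K 1 2 - K 0 2 * K 1 1)/2) * hC' 2 2
    · linear_combination (K 2 2 * K 0 0 - K 2 0 * K 0 2) * hC' 1 2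
        + ((K 0 2 * K 1 0 - K 0 0 * K 1 2)/2) * hC' 2 2
    · linear_combination (K 2 0 * K 0 1 - K 2 1 * K 0 0) * hC' 1 2
        + ((K 0 0 * K 1 1 - K 0 1 * K 1 0)/2) * hC' 2 2
  refine ⟨1, d⁻¹ • w, K, fun _ => 0, one_ne_zero, ?_, ?_⟩
  · intro μ
    calc L μ = d⁻¹ • (d • L μ) := by rw [smul_smul, inv_mul_cancel₀ hd, one_smul]
      _ = d⁻¹ • crossProduct w (K μ) := by rw [key μ]
      _ = crossProduct (d⁻¹ • w) (K μ) := by rw [_root_.map_smul]; rfl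
  · intro μ
    simp
end

section
/- Let χ⁰ ∈ ℝ, χ ∈ ℝ³, e₀, e₁, e₂ ∈ ℝ³ and e⁰₀, e⁰₁, e⁰₂ ∈ ℝ, and define K_μ = χ × e_μ and L_μ = χ⁰·e_μ − e⁰_μ·χ for μ ∈ {0,1,2}. Then (i) the simplicity constraints hold: L_μ·K_ν + L_ν·K_μ = 0 for all μ, ν ∈ {0,1,2}; and (ii) the 3×3 real matrix whose rows are K₀, K₁, K₂ has determinant zero. -/
open Matrix

/-- **Converse direction of Proposition 1 (gravitational sector).**
If `K μ = χ × e μ` and `L μ = χ⁰ • e μ - e⁰ μ • χ`, then the simplicity constraints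
`L μ ⬝ᵥ K ν + L ν ⬝ᵥ K μ = 0` hold, and the 3×3 matrix whose rows are the `K μ`
has vanishing determinant. -/
theorem simple_B_satisfies_simplicity_and_detK_eq_zero
    (χ0 : ℝ) (χ : Fin 3 → ℝ) (e : Fin 3 → (Fin 3 → ℝ)) (e0 : Fin 3 → ℝ)
    (K L : Fin 3 → (Fin 3 → ℝ))
    (hK : ∀ μ : Fin 3, K μ = crossProduct χ (e μ))
    (hL : ∀ μ : Fin 3, L μ = χ0 • e μ - e0 μ • χ) :
    (∀ μ ν : Fin 3, L μ ⬝ᵥ K ν + L ν ⬝ᵥ K μ = 0) ∧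
    (Matrix.of K).det = 0 := by
  constructor
  · intro μ ν
    rw [hK, hK, hL, hL]
    simp [crossProduct, dotProduct, Fin.sum_univ_three, Pi.sub_apply, Pi.smul_apply,
      smul_eq_mul]
    ring
  · rw [det_fin_three]
    simp only [of_apply, hK]
    simp [crossProduct]
    ring
end

section
/- Let (L₀, L₁, L₂) be a basis of ℝ³ and let K₀, K₁, K₂ ∈ ℝ³ satisfy L_μ·K_ν + L_ν·K_μ = 0 for all μ, ν ∈ {0,1,2}. Then K₀, K₁, K₂ are linearly dependent (equivalently, the 3×3 matrix whose rows are K₀, K₁, K₂ has determinant zero). -/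
open Matrix

/-- **Key intermediate step of Proposition 1.**
If `(L 0, L 1, L 2)` is a basis of `ℝ³` and the simplicity constraints
`L μ ⬝ᵥ K ν + L ν ⬝ᵥ K μ = 0` hold, then the vectors `K 0, K 1, K 2` are linearly
dependent; equivalently, the 3×3 matrix whose rows are the `K μ` has determinant zero. -/
theorem simplicity_forces_K_dependent
    (L K : Fin 3 → (Fin 3 → ℝ))
    (hLindep : LinearIndependent ℝ L)
    (hLspan : Submodule.span ℝ (Set.range L) = ⊤)
    (hC : ∀ μ ν : Fin 3, L μ ⬝ᵥ K ν + L ν ⬝ᵥ K μ = 0) :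
    ¬ LinearIndependent ℝ K ∧ (Matrix.of K).det = 0 := by
  set M : Matrix (Fin 3) (Fin 3) ℝ := Matrix.of L with hM
  set N : Matrix (Fin 3) (Fin 3) ℝ := Matrix.of K with hN
  have hMunit : IsUnit M := Matrix.linearIndependent_rows_iff_isUnit.mp hLindep
  have hMdet : M.det ≠ 0 := by
    simpa [Matrix.isUnit_iff_isUnit_det, isUnit_iff_ne_zero] using hMunit
  set A : Matrix (Fin 3) (Fin 3) ℝ := M * Nᵀ with hA
  have hAanti : Aᵀ = -A := by
    ext i j
    have := hC j i
    simp only [hA, Matrix.transpose_apply, Matrix.neg_apply, Matrix.mul_apply,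
      Matrix.transpose_apply, hM, hN, Matrix.of_apply]
    simp only [dotProduct, Matrix.of_apply] at this ⊢
    linarith
  have hAdet : A.det = 0 := by
    have h1 : A.det = Aᵀ.det := (Matrix.det_transpose A).symm
    rw [hAanti, Matrix.det_neg] at h1
    simp at h1
    linarith
  have hNdet : N.det = 0 := by
    have : A.det = M.det * N.det := by
      rw [hA, Matrix.det_mul, Matrix.det_transpose]
    rw [this] at hAdet
    exact (mul_eq_zero.mp hAdet).resolve_left hMdet
  refine ⟨fun h => ?_, hNdet⟩
  have : IsUnit N := Matrix.linearIndependent_rows_iff_isUnit.mp h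
  rw [Matrix.isUnit_iff_isUnit_det, isUnit_iff_ne_zero] at this
  exact this hNdet
end

section
/- Let χ ∈ ℝ⁴ be nonzero and let B : Fin 4 → Fin 4 → ℝ be an antisymmetric matrix. Then the linear simplicity constraint Σ_{I∈Fin 4} χ_I·B(I,J) = 0 for all J ∈ Fin 4 holds if and only if there exists e ∈ ℝ⁴ such that B(I,J) = Σ_{K,L∈Fin 4} ε_{IJKL}·χ_K·e_L for all I, J. -/
open Matrix

/-- The totally antisymmetric Levi-Civita symbol on `Fin 4`, with `ε 0 1 2 3 = 1`. -/
noncomputable def eps (I J K L : Fin 4) : ℝ :=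
  Matrix.det (Matrix.of fun r c => if ![I, J, K, L] r = c then (1 : ℝ) else 0)

/-- A 4×4 real matrix is antisymmetric. -/
def Antisym (B : Fin 4 → Fin 4 → ℝ) : Prop := ∀ I J, B J I = - B I J

private theorem det_fin_four' (A : Matrix (Fin 4) (Fin 4) ℝ) : A.det =
    A 0 0 * (A 1 1 * (A 2 2 * A 3 3 - A 2 3 * A 3 2) - A 1 2 * (A 2 1 * A 3 3 - A 2 3 * A 3 1)
      + A 1 3 * (A 2 1 * A 3 2 - A 2 2 * A 3 1))
  - A 0 1 * (A 1 0 * (A 2 2 * A 3 3 - A 2 3 * A 3 2) - A 1 2 * (A 2 0 * A 3 3 - A 2 3 * A 3 0)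
      + A 1 3 * (A 2 0 * A 3 2 - A 2 2 * A 3 0))
  + A 0 2 * (A 1 0 * (A 2 1 * A 3 3 - A 2 3 * A 3 1) - A 1 1 * (A 2 0 * A 3 3 - A 2 3 * A 3 0)
      + A 1 3 * (A 2 0 * A 3 1 - A 2 1 * A 3 0))
  - A 0 3 * (A 1 0 * (A 2 1 * A 3 2 - A 2 2 * A 3 1) - A 1 1 * (A 2 0 * A 3 2 - A 2 2 * A 3 0)
      + A 1 2 * (A 2 0 * A 3 1 - A 2 1 * A 3 0)) := by
  rw [Matrix.det_succ_row_zero]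
  simp [Fin.sum_univ_four, Matrix.det_fin_three, Fin.succAbove, Matrix.submatrix_apply,
    show (Fin.succ 2 : Fin 4) = 3 from rfl, show (Fin.castSucc 2 : Fin 4) = 2 from rfl,
    show ((3:Fin 4):ℕ) = 3 from rfl]
  ring

set_option maxHeartbeats 1600000 in
private theorem eps_expand (χ e : Fin 4 → ℝ) : ∀ I J : Fin 4,
    (∑ K : Fin 4, ∑ L : Fin 4, eps I J K L * χ K * e L) =
    ![![0, χ 2 * e 3 - χ 3 * e 2, χ 3 * e 1 - χ 1 * e 3, χ 1 * e 2 - χ 2 * e 1],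
      ![χ 3 * e 2 - χ 2 * e 3, 0, χ 0 * e 3 - χ 3 * e 0, χ 2 * e 0 - χ 0 * e 2],
      ![χ 1 * e 3 - χ 3 * e 1, χ 3 * e 0 - χ 0 * e 3, 0, χ 0 * e 1 - χ 1 * e 0],
      ![χ 2 * e 1 - χ 1 * e 2, χ 0 * e 2 - χ 2 * e 0, χ 1 * e 0 - χ 0 * e 1, 0]] I J := by
  intro I J
  fin_cases I <;> fin_cases J <;>
    · simp [eps, det_fin_four', Fin.sum_univ_four]
      try ring

set_option maxHeartbeats 1600000 in
/-- For `χ ∈ ℝ⁴` nonzero and `B` antisymmetric, the linear simplicity constraint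
`Σ_I χ_I B(I,J) = 0` (for all `J`) holds iff `B` is simple, i.e. there is `e ∈ ℝ⁴`
with `B(I,J) = Σ_{K,L} ε_{IJKL} χ_K e_L`. -/
theorem linear_simplicity_iff_simple
    (χ : Fin 4 → ℝ) (hχ : χ ≠ 0)
    (B : Fin 4 → Fin 4 → ℝ) (hB : Antisym B) :
    (∀ J : Fin 4, (∑ I : Fin 4, χ I * B I J) = 0) ↔
    (∃ e : Fin 4 → ℝ, ∀ I J : Fin 4,
      B I J = ∑ K : Fin 4, ∑ L : Fin 4, eps I J K L * χ K * e L) := by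
  have hd : ∀ I, B I I = 0 := fun I => by have := hB I I; linarith
  constructor
  · intro h
    have hn : χ 0 ^ 2 + χ 1 ^ 2 + χ 2 ^ 2 + χ 3 ^ 2 ≠ 0 := by
      intro h0
      apply hχ
      funext i
      have h00 : χ 0 = 0 := by nlinarith [sq_nonneg (χ 0), sq_nonneg (χ 1), sq_nonneg (χ 2), sq_nonneg (χ 3)]
      have h11 : χ 1 = 0 := by nlinarith [sq_nonneg (χ 0), sq_nonneg (χ 1), sq_nonneg (χ 2), sq_nonneg (χ 3)]
      have h22 : χ 2 = 0 := by nlinarith [sq_nonneg (χ 0), sq_nonneg (χ 1), sq_nonneg (χ 2), sq_nonneg (χ 3)]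
      have h33 : χ 3 = 0 := by nlinarith [sq_nonneg (χ 0), sq_nonneg (χ 1), sq_nonneg (χ 2), sq_nonneg (χ 3)]
      fin_cases i <;> simp [h00, h11, h22, h33]
    set n : ℝ := χ 0 ^ 2 + χ 1 ^ 2 + χ 2 ^ 2 + χ 3 ^ 2 with hndef
    have G0 : χ 1 * B 0 1 + χ 2 * B 0 2 + χ 3 * B 0 3 = 0 := by
      have := h 0; rw [Fin.sum_univ_four] at this
      linear_combination -this + χ 1 * hB 0 1 + χ 2 * hB 0 2 + χ 3 * hB 0 3 + χ 0 * hB 0 0 / 2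
    have G1 : χ 0 * B 0 1 - χ 2 * B 1 2 - χ 3 * B 1 3 = 0 := by
      have := h 1; rw [Fin.sum_univ_four] at this
      linear_combination this - χ 2 * hB 1 2 - χ 3 * hB 1 3 - χ 1 * hB 1 1 / 2
    have G2 : χ 0 * B 0 2 + χ 1 * B 1 2 - χ 3 * B 2 3 = 0 := by
      have := h 2; rw [Fin.sum_univ_four] at this
      linear_combination this - χ 3 * hB 2 3 - χ 2 * hB 2 2 / 2
    have G3 : χ 0 * B 0 3 + χ 1 * B 1 3 + χ 2 * B 2 3 = 0 := by
      have := h 3; rw [Fin.sum_univ_four] at this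
      linear_combination this - χ 3 * hB 3 3 / 2
    refine ⟨![-(χ 1 * B 2 3 - χ 2 * B 1 3 + χ 3 * B 1 2) / n,
              (χ 0 * B 2 3 - χ 2 * B 0 3 + χ 3 * B 0 2) / n,
              -(χ 0 * B 1 3 - χ 1 * B 0 3 + χ 3 * B 0 1) / n,
              (χ 0 * B 1 2 - χ 1 * B 0 2 + χ 2 * B 0 1) / n], ?_⟩
    intro I J
    rw [eps_expand]
    fin_cases I <;> fin_cases J <;>
      simp only [show (⟨0, by omega⟩ : Fin 4) = 0 from rfl, show (⟨1, by omega⟩ : Fin 4) = 1 from rfl,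
        show (⟨2, by omega⟩ : Fin 4) = 2 from rfl, show (⟨3, by omega⟩ : Fin 4) = 3 from rfl,
        Matrix.cons_val_zero, Matrix.cons_val_one, Matrix.head_cons,
        Matrix.cons_val_two, Matrix.cons_val_three, Matrix.tail_cons]
    · exact hd 0
    · field_simp; linear_combination χ 0 * G1 + χ 1 * G0
    · field_simp; linear_combination χ 0 * G2 + χ 2 * G0
    · field_simp; linear_combination χ 0 * G3 + χ 3 * G0
    · field_simp; linear_combination n * hB 0 1 - χ 0 * G1 - χ 1 * G0
    · exact hd 1
    · field_simp; linear_combination χ 1 * G2 - χ 2 * G1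
    · field_simp; linear_combination χ 1 * G3 - χ 3 * G1
    · field_simp; linear_combination n * hB 0 2 - χ 0 * G2 - χ 2 * G0
    · field_simp; linear_combination n * hB 1 2 - χ 1 * G2 + χ 2 * G1
    · exact hd 2
    · field_simp; linear_combination χ 2 * G3 - χ 3 * G2
    · field_simp; linear_combination n * hB 0 3 - χ 0 * G3 - χ 3 * G0
    · field_simp; linear_combination n * hB 1 3 - χ 1 * G3 + χ 3 * G1
    · field_simp; linear_combination n * hB 2 3 - χ 2 * G3 + χ 3 * G2
    · exact hd 3
  · rintro ⟨e, he⟩ J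
    have hx := eps_expand χ e
    rw [Fin.sum_univ_four, he 0 J, he 1 J, he 2 J, he 3 J, hx 0 J, hx 1 J, hx 2 J, hx 3 J]
    fin_cases J <;>
      · simp only [show (⟨0, by omega⟩ : Fin 4) = 0 from rfl, show (⟨1, by omega⟩ : Fin 4) = 1 from rfl,
          show (⟨2, by omega⟩ : Fin 4) = 2 from rfl, show (⟨3, by omega⟩ : Fin 4) = 3 from rfl,
          Matrix.cons_val_zero, Matrix.cons_val_one, Matrix.head_cons,
          Matrix.cons_val_two, Matrix.cons_val_three, Matrix.tail_cons]
        ring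
end

section
/- Let χ⁰ ∈ ℝ, χ ∈ ℝ³, and for μ ∈ {0,1,2} let e_μ ∈ ℝ³ and e⁰_μ ∈ ℝ. Define B⁺_μ = −(χ × e_μ) + e⁰_μ·χ − χ⁰·e_μ and B⁻_μ = (χ × e_μ) + e⁰_μ·χ − χ⁰·e_μ. Then for all μ, ν ∈ {0,1,2}: B⁺_μ·B⁺_ν = B⁻_μ·B⁻_ν = (e_μ·e_ν)·(‖χ‖² + (χ⁰)²) − (χ·e_μ)·(χ·e_ν) + ‖χ‖²·e⁰_μ·e⁰_ν − χ⁰·(e⁰_μ·(χ·e_ν) + e⁰_ν·(χ·e_μ)). -/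
open Matrix

/-- **Equality of the self-dual and anti-self-dual Urbantke metrics
(gravitational sector).**  With `B⁺ μ = −(χ × e μ) + e⁰ μ • χ − χ⁰ • e μ` and
`B⁻ μ = (χ × e μ) + e⁰ μ • χ − χ⁰ • e μ`, one has
`B⁺ μ ⬝ᵥ B⁺ ν = B⁻ μ ⬝ᵥ B⁻ ν = (e μ ⬝ᵥ e ν)(‖χ‖² + (χ⁰)²) − (χ ⬝ᵥ e μ)(χ ⬝ᵥ e ν)
+ ‖χ‖² e⁰ μ e⁰ ν − χ⁰ (e⁰ μ (χ ⬝ᵥ e ν) + e⁰ ν (χ ⬝ᵥ e μ))`. -/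
theorem urbantke_metrics_gravitational
    (χ0 : ℝ) (χ : Fin 3 → ℝ) (e : Fin 3 → (Fin 3 → ℝ)) (e0 : Fin 3 → ℝ)
    (Bp Bm : Fin 3 → (Fin 3 → ℝ))
    (hBp : ∀ μ : Fin 3, Bp μ = -(crossProduct χ (e μ)) + e0 μ • χ - χ0 • e μ)
    (hBm : ∀ μ : Fin 3, Bm μ = (crossProduct χ (e μ)) + e0 μ • χ - χ0 • e μ) :
    ∀ μ ν : Fin 3,
      Bp μ ⬝ᵥ Bp ν = Bm μ ⬝ᵥ Bm ν ∧
      Bp μ ⬝ᵥ Bp ν =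
        (e μ ⬝ᵥ e ν) * ((χ ⬝ᵥ χ) + χ0 ^ 2) - (χ ⬝ᵥ e μ) * (χ ⬝ᵥ e ν)
          + (χ ⬝ᵥ χ) * (e0 μ * e0 ν)
          - χ0 * (e0 μ * (χ ⬝ᵥ e ν) + e0 ν * (χ ⬝ᵥ e μ)) := by
  intro μ ν
  rw [hBp, hBp, hBm, hBm]
  simp only [dotProduct, crossProduct, Fin.sum_univ_three, Pi.add_apply, Pi.sub_apply,
    Pi.neg_apply, Pi.smul_apply, smul_eq_mul, cons_val_zero, cons_val_one, head_cons,
    cons_val_two, tail_cons, Matrix.cons_val', Matrix.cons_val_fin_one, Matrix.empty_val',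
    LinearMap.mk₂_apply]
  constructor <;> ring
end

section
/- Let χ⁰ ∈ ℝ, χ ∈ ℝ³, and for μ ∈ {0,1,2} let e_μ ∈ ℝ³ and e⁰_μ ∈ ℝ. Define C⁺_μ = −(χ × e_μ) + e⁰_μ·χ − χ⁰·e_μ (the gravitational self-dual component) and D±_μ = −(χ × e_μ) ± (e⁰_μ·χ − χ⁰·e_μ) (the topological self-dual and anti-self-dual components). Then for all μ, ν ∈ {0,1,2}: D⁺_μ·D⁺_ν = D⁻_μ·D⁻_ν = C⁺_μ·C⁺_ν, i.e. the Urbantke metrics of the topological sector coincide with each other and with the Urbantke metric of the gravitational sector, the common value being g_{μν} = (e_μ·e_ν)·(‖χ‖² + (χ⁰)²) − (χ·e_μ)·(χ·e_ν) + ‖χ‖²·e⁰_μ·e⁰_ν − χ⁰·(e⁰_μ·(χ·e_ν) + e⁰_ν·(χ·e_μ)). -/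
open Matrix

/-- **Equality of the Urbantke metrics of the topological and gravitational
sectors.**  With `C⁺ μ = −(χ × e μ) + e⁰ μ • χ − χ⁰ • e μ` (gravitational
self-dual component) and `D± μ = −(χ × e μ) ± (e⁰ μ • χ − χ⁰ • e μ)` (topological
(anti-)self-dual components), the Urbantke metrics coincide:
`D⁺ μ ⬝ᵥ D⁺ ν = D⁻ μ ⬝ᵥ D⁻ ν = C⁺ μ ⬝ᵥ C⁺ ν`, the common value being
`(e μ ⬝ᵥ e ν)(‖χ‖² + (χ⁰)²) − (χ ⬝ᵥ e μ)(χ ⬝ᵥ e ν) + ‖χ‖² e⁰ μ e⁰ ν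
− χ⁰ (e⁰ μ (χ ⬝ᵥ e ν) + e⁰ ν (χ ⬝ᵥ e μ))`. -/
theorem urbantke_metrics_topological_eq_gravitational
    (χ0 : ℝ) (χ : Fin 3 → ℝ) (e : Fin 3 → (Fin 3 → ℝ)) (e0 : Fin 3 → ℝ)
    (Cp Dp Dm : Fin 3 → (Fin 3 → ℝ))
    (hCp : ∀ μ : Fin 3, Cp μ = -(crossProduct χ (e μ)) + e0 μ • χ - χ0 • e μ)
    (hDp : ∀ μ : Fin 3, Dp μ = -(crossProduct χ (e μ)) + (e0 μ • χ - χ0 • e μ))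
    (hDm : ∀ μ : Fin 3, Dm μ = -(crossProduct χ (e μ)) - (e0 μ • χ - χ0 • e μ)) :
    ∀ μ ν : Fin 3,
      Dp μ ⬝ᵥ Dp ν = Dm μ ⬝ᵥ Dm ν ∧
      Dp μ ⬝ᵥ Dp ν = Cp μ ⬝ᵥ Cp ν ∧
      Dp μ ⬝ᵥ Dp ν =
        (e μ ⬝ᵥ e ν) * ((χ ⬝ᵥ χ) + χ0 ^ 2) - (χ ⬝ᵥ e μ) * (χ ⬝ᵥ e ν)
          + (χ ⬝ᵥ χ) * (e0 μ * e0 ν)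
          - χ0 * (e0 μ * (χ ⬝ᵥ e ν) + e0 ν * (χ ⬝ᵥ e μ)) := by
  intro μ ν
  refine ⟨?_, ?_, ?_⟩ <;>
    simp only [hCp, hDp, hDm, crossProduct, dotProduct, Fin.sum_univ_three,
      LinearMap.mk₂_apply, Pi.add_apply, Pi.sub_apply, Pi.neg_apply, Pi.smul_apply,
      smul_eq_mul, Matrix.cons_val_zero, Matrix.cons_val_one, Matrix.head_cons,
      Matrix.cons_val_two, Matrix.tail_cons] <;> ring
end

section
/- Let χ⁰ ∈ ℝ with χ⁰ ≠ 0, χ ∈ ℝ³, and for μ ∈ {0,1,2} let e_μ ∈ ℝ³ and e⁰_μ ∈ ℝ. Define K_μ = χ × e_μ, L_μ = χ⁰·e_μ − e⁰_μ·χ, and B±_μ = ∓K_μ − L_μ. Then det(B⁺) = det(B⁻) = −(1 + ‖χ‖²/(χ⁰)²)·det(L), where det(B±) and det(L) denote the determinants of the 3×3 matrices whose rows are B±₀, B±₁, B±₂ and L₀, L₁, L₂ respectively. In particular, det(B⁺) and det(B⁻) have the same sign: ε⁺ = ε⁻ in the gravitational sector. -/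
open Matrix

/-- **Sign of `det(±B)` in the gravitational sector (Appendix C.1).**
With `K μ = χ × e μ`, `L μ = χ⁰ • e μ − e⁰ μ • χ` and `B± μ = ∓ K μ − L μ`, one has
`det B⁺ = det B⁻ = −(1 + ‖χ‖²/(χ⁰)²) det L`; in particular `det B⁺` and `det B⁻`
have the same sign: `ε⁺ = ε⁻`. -/
theorem det_selfdual_gravitational
    (χ0 : ℝ) (hχ0 : χ0 ≠ 0) (χ : Fin 3 → ℝ) (e : Fin 3 → (Fin 3 → ℝ)) (e0 : Fin 3 → ℝ)
    (K L Bp Bm : Fin 3 → (Fin 3 → ℝ))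
    (hK : ∀ μ : Fin 3, K μ = crossProduct χ (e μ))
    (hL : ∀ μ : Fin 3, L μ = χ0 • e μ - e0 μ • χ)
    (hBp : ∀ μ : Fin 3, Bp μ = -(K μ) - L μ)
    (hBm : ∀ μ : Fin 3, Bm μ = K μ - L μ) :
    (Matrix.of Bp).det = -(1 + (χ ⬝ᵥ χ) / χ0 ^ 2) * (Matrix.of L).det ∧
    (Matrix.of Bm).det = -(1 + (χ ⬝ᵥ χ) / χ0 ^ 2) * (Matrix.of L).det ∧
    Real.sign (Matrix.of Bp).det = Real.sign (Matrix.of Bm).det := by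
  have hp : (Matrix.of Bp).det = -(1 + (χ ⬝ᵥ χ) / χ0 ^ 2) * (Matrix.of L).det := by
    simp only [Matrix.det_fin_three, Matrix.of_apply, hBp, hBm, hK, hL, crossProduct,
      dotProduct, Fin.sum_univ_three, Pi.sub_apply, Pi.neg_apply, Pi.smul_apply,
      smul_eq_mul, LinearMap.mk₂_apply, Matrix.cons_val_zero, Matrix.cons_val_one,
      Matrix.head_cons, Matrix.cons_val_two, Matrix.tail_cons]
    field_simp
    ring
  have hm : (Matrix.of Bm).det = -(1 + (χ ⬝ᵥ χ) / χ0 ^ 2) * (Matrix.of L).det := by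
    simp only [Matrix.det_fin_three, Matrix.of_apply, hBp, hBm, hK, hL, crossProduct,
      dotProduct, Fin.sum_univ_three, Pi.sub_apply, Pi.neg_apply, Pi.smul_apply,
      smul_eq_mul, LinearMap.mk₂_apply, Matrix.cons_val_zero, Matrix.cons_val_one,
      Matrix.head_cons, Matrix.cons_val_two, Matrix.tail_cons]
    field_simp
    ring
  exact ⟨hp, hm, by rw [hp, hm]⟩
end

section
/- Let χ⁰ ∈ ℝ with χ⁰ ≠ 0, χ ∈ ℝ³, and for μ ∈ {0,1,2} let e_μ ∈ ℝ³ and e⁰_μ ∈ ℝ. Define K_μ = χ⁰·e_μ − e⁰_μ·χ, L_μ = χ × e_μ, and B±_μ = ∓K_μ − L_μ. Then det(B±) = ∓(1 + ‖χ‖²/(χ⁰)²)·det(K), where det(B±) and det(K) denote the determinants of the 3×3 matrices whose rows are B±₀, B±₁, B±₂ and K₀, K₁, K₂ respectively. In particular, det(B⁺) = −det(B⁻), so in the topological sector the signs satisfy ε⁺ = −ε⁻ whenever det(K) ≠ 0. -/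
open Matrix

/-- **Sign of `det(±B)` in the topological sector (Appendix C.2).**
With `K μ = χ⁰ • e μ − e⁰ μ • χ`, `L μ = χ × e μ` and `B± μ = ∓ K μ − L μ`, one has
`det B± = ∓(1 + ‖χ‖²/(χ⁰)²) det K`; in particular `det B⁺ = −det B⁻`, so the signs
satisfy `ε⁺ = −ε⁻` whenever `det K ≠ 0`. -/
theorem det_selfdual_topological
    (χ0 : ℝ) (hχ0 : χ0 ≠ 0) (χ : Fin 3 → ℝ) (e : Fin 3 → (Fin 3 → ℝ)) (e0 : Fin 3 → ℝ)
    (K L Bp Bm : Fin 3 → (Fin 3 → ℝ))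
    (hK : ∀ μ : Fin 3, K μ = χ0 • e μ - e0 μ • χ)
    (hL : ∀ μ : Fin 3, L μ = crossProduct χ (e μ))
    (hBp : ∀ μ : Fin 3, Bp μ = -(K μ) - L μ)
    (hBm : ∀ μ : Fin 3, Bm μ = K μ - L μ) :
    (Matrix.of Bp).det = -(1 + (χ ⬝ᵥ χ) / χ0 ^ 2) * (Matrix.of K).det ∧
    (Matrix.of Bm).det = (1 + (χ ⬝ᵥ χ) / χ0 ^ 2) * (Matrix.of K).det ∧
    (Matrix.of Bp).det = -(Matrix.of Bm).det ∧
    ((Matrix.of K).det ≠ 0 →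
      Real.sign (Matrix.of Bp).det = - Real.sign (Matrix.of Bm).det) := by
  have h1 : (Matrix.of Bp).det = -(1 + (χ ⬝ᵥ χ) / χ0 ^ 2) * (Matrix.of K).det := by
    simp only [Matrix.det_fin_three, Matrix.of_apply, hBp, hBm, hK, hL, crossProduct,
      dotProduct, Fin.sum_univ_three, Pi.sub_apply, Pi.neg_apply, Pi.smul_apply,
      smul_eq_mul, LinearMap.mk₂_apply, Matrix.cons_val_zero, Matrix.cons_val_one,
      Matrix.head_cons, Matrix.cons_val_two, Matrix.tail_cons]
    field_simp
    ring
  have h2 : (Matrix.of Bm).det = (1 + (χ ⬝ᵥ χ) / χ0 ^ 2) * (Matrix.of K).det := by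
    simp only [Matrix.det_fin_three, Matrix.of_apply, hBp, hBm, hK, hL, crossProduct,
      dotProduct, Fin.sum_univ_three, Pi.sub_apply, Pi.neg_apply, Pi.smul_apply,
      smul_eq_mul, LinearMap.mk₂_apply, Matrix.cons_val_zero, Matrix.cons_val_one,
      Matrix.head_cons, Matrix.cons_val_two, Matrix.tail_cons]
    field_simp
    ring
  have h3 : (Matrix.of Bp).det = -(Matrix.of Bm).det := by rw [h1, h2]; ring
  refine ⟨h1, h2, h3, fun hKne => ?_⟩
  rw [h3, Real.sign_neg]
end
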